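/- A supersolvable arrangement is divisionally free: if A is a supersolvable arrangement in V = K^ℓ, then there exists a flag V = Y_0 ⊋ Y_1 ⊋ ⋯ ⊋ Y_{ℓ−1} with Y_i ∈ L_i(A) such that b_2(A) = Σ_{i=0}^{ℓ−2} (|A^{Y_i}| − |A^{Y_{i+1}}|)·|A^{Y_{i+1}}| (where A^{Y_0} = A). -/

import Mathlib

/-! Basic theory of hyperplane arrangements, their logarithmic derivation modules,
freeness, intersection lattices, Möbius functions, characteristic polynomials,
Betti numbers, localizations, restrictions and multiarrangements. -/

open Module MvPolynomial Classical

noncomputable section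

namespace Arr

variable {K : Type} [Field K] {W : Type} [AddCommGroup W] [Module K W] [FiniteDimensional K W]

/-- A hyperplane in `W`: the kernel of a nonzero linear functional. -/
def IsHyperplane (H : Submodule K W) : Prop :=
  ∃ α : W →ₗ[K] K, α ≠ 0 ∧ LinearMap.ker α = H

/-- A (central) arrangement: a finite set of linear hyperplanes. -/
def IsArrangement (A : Finset (Submodule K W)) : Prop :=
  ∀ H ∈ A, IsHyperplane H

/-- The coordinate ring `S = K[x_1, ..., x_ℓ]` of `W ≅ K^ℓ`, `ℓ = dim W`. -/
abbrev CoordRing (K W : Type) [Field K] [AddCommGroup W] [Module K W]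
    [FiniteDimensional K W] : Type :=
  MvPolynomial (Fin (finrank K W)) K

/-- The module `Der S = ⊕ S ∂/∂xᵢ` of `K`-derivations of `S`. -/
abbrev ArrDeriv (K W : Type) [Field K] [AddCommGroup W] [Module K W]
    [FiniteDimensional K W] : Type :=
  Derivation K (CoordRing K W) (CoordRing K W)

/-- The degree-one polynomial corresponding to a linear form `α ∈ W*`,
with respect to a fixed basis of `W`. -/
def polyOfDual (α : W →ₗ[K] K) : CoordRing K W :=
  ∑ i, MvPolynomial.C (α (finBasis K W i)) * MvPolynomial.X i

/-- The logarithmic derivation module `D(A, m)` of a multiarrangement `(A, m)`: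
all derivations `θ` with `θ(α_H) ∈ S·α_H^{m(H)}` for every `H ∈ A`. -/
def logDerivM (A : Finset (Submodule K W)) (m : Submodule K W → ℕ) :
    Submodule (CoordRing K W) (ArrDeriv K W) where
  carrier := {θ | ∀ H ∈ A, ∀ α : W →ₗ[K] K, LinearMap.ker α = H →
    polyOfDual α ^ m H ∣ θ (polyOfDual α)}
  add_mem' := fun ha hb H hH α hα => by
    rw [Derivation.add_apply]
    exact dvd_add (ha H hH α hα) (hb H hH α hα)
  zero_mem' := fun H hH α hα => by
    rw [Derivation.zero_apply]
    exact dvd_zero _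
  smul_mem' := fun c θ hθ H hH α hα => by
    rw [Derivation.smul_apply, smul_eq_mul]
    exact (hθ H hH α hα).mul_left c

/-- The logarithmic derivation module `D(A)` of an arrangement. -/
def logDeriv (A : Finset (Submodule K W)) : Submodule (CoordRing K W) (ArrDeriv K W) :=
  logDerivM A fun _ => 1

/-- A derivation is homogeneous of (polynomial) degree `d` : it sends every
variable (equivalently, every linear form) to a homogeneous polynomial of degree `d`. -/
def IsHomogDeriv (θ : ArrDeriv K W) (d : ℕ) : Prop :=
  ∀ j, (θ (MvPolynomial.X j)).IsHomogeneous d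

/-- The multiarrangement `(A, m)` is free with exponents `(d 0, ..., d (n-1))`: the module
`D(A,m)` admits a basis of homogeneous derivations of degrees `d 0, ..., d (n-1)`. -/
def IsFreeWithExpM (A : Finset (Submodule K W)) (m : Submodule K W → ℕ)
    {n : ℕ} (d : Fin n → ℕ) : Prop :=
  ∃ b : Basis (Fin n) (CoordRing K W) ↥(logDerivM A m),
    ∀ i, IsHomogDeriv (b i : ArrDeriv K W) (d i)

/-- The multiarrangement `(A, m)` is free. -/
def IsFreeM (A : Finset (Submodule K W)) (m : Submodule K W → ℕ) : Prop :=
  ∃ d : Fin (finrank K W) → ℕ, IsFreeWithExpM A m d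

/-- The arrangement `A` is free with exponents `(d 0, ..., d (n-1))`. -/
def IsFreeWithExp (A : Finset (Submodule K W)) {n : ℕ} (d : Fin n → ℕ) : Prop :=
  IsFreeWithExpM A (fun _ => 1) d

/-- The arrangement `A` is free. -/
def IsFree (A : Finset (Submodule K W)) : Prop :=
  IsFreeM A fun _ => 1

/-- The intersection lattice `L(A)`: all intersections of subfamilies of `A`
(including `W` itself, as the empty intersection). -/
def interLattice (A : Finset (Submodule K W)) : Finset (Submodule K W) :=
  A.powerset.image fun B => B.inf id

/-- Codimension of a subspace. -/
def codim (X : Submodule K W) : ℕ :=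
  finrank K W - finrank K X

/-- The localization `A_X = {H ∈ A : X ⊆ H}`. -/
def localize (A : Finset (Submodule K W)) (X : Submodule K W) : Finset (Submodule K W) :=
  A.filter fun H => X ≤ H

/-- The restriction `A^X = {H ∩ X : H ∈ A \ A_X}`, an arrangement in `X`. -/
def restrict (A : Finset (Submodule K W)) (X : Submodule K W) : Finset (Submodule K ↥X) :=
  (A.filter fun H => ¬ X ≤ H).image fun H => Submodule.comap X.subtype H

/-- Fuel-based recursion computing the Möbius function of the poset `Lat`;
fuel `n` computes correctly all values at elements of codimension at most `n`. -/
def mobiusAux (Lat : Finset (Submodule K W)) : ℕ → Submodule K W → ℤ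
  | 0, _ => 1
  | n + 1, X =>
      if X = ⊤ then 1
      else - ∑ Y ∈ Lat.filter fun Y => X < Y, mobiusAux Lat n Y

/-- The Möbius function of `L(A)`: `μ(W) = 1` and
`μ(X) = - ∑_{Y ∈ L(A), X ⊊ Y} μ(Y)` for `X ≠ W`. -/
def mobius (A : Finset (Submodule K W)) (X : Submodule K W) : ℤ :=
  mobiusAux (interLattice A) (finrank K W) X

/-- The `i`-th Betti number `b_i(A)`: the coefficient of `t^i` in the Poincaré
polynomial `π(A;t) = ∑_{X ∈ L(A)} μ(X)(-t)^{codim X}`. -/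
def betti (A : Finset (Submodule K W)) (i : ℕ) : ℤ :=
  (-1 : ℤ) ^ i * ∑ X ∈ (interLattice A).filter fun X => codim X = i, mobius A X

/-- The characteristic polynomial `χ(A;t) = ∑_{X ∈ L(A)} μ(X) t^{dim X} ∈ ℤ[t]`. -/
def charPoly (A : Finset (Submodule K W)) : Polynomial ℤ :=
  ∑ X ∈ interLattice A, Polynomial.C (mobius A X) * Polynomial.X ^ (finrank K X)

/-- The Ziegler multiplicity `m^H` on `A^H`:
`m^H(Y) = |{L ∈ A \ {H} : H ∩ L = Y}| = |A_Y| - 1`. -/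
def zieglerMult (A : Finset (Submodule K W)) (H : Submodule K W) (Y : Submodule K ↥H) : ℕ :=
  ((A.erase H).filter fun L => Submodule.comap H.subtype L = Y).card

end Arr

open Arr

/-- An arrangement is supersolvable if there is a flag `V = X_0 ⊋ X_1 ⊋ ⋯ ⊋ X_ℓ` with
`X_i ∈ L_i(A)` such that for all distinct `H, L ∈ A_{X_{i+1}} \ A_{X_i}` there is
`K ∈ A_{X_i}` with `H ∩ L ⊆ K`. -/
def Supersolvable {K : Type} [Field K] {W : Type} [AddCommGroup W] [Module K W]
    [FiniteDimensional K W] (A : Finset (Submodule K W)) : Prop :=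
  ∃ X : Fin (Module.finrank K W + 1) → Submodule K W,
    (∀ i, X i ∈ interLattice A ∧ codim (X i) = i.1) ∧
    (∀ i : Fin (Module.finrank K W), X i.succ < X i.castSucc) ∧
    (∀ i : Fin (Module.finrank K W),
      ∀ H ∈ localize A (X i.succ), ∀ L ∈ localize A (X i.succ),
        H ∉ localize A (X i.castSucc) → L ∉ localize A (X i.castSucc) → H ≠ L →
          ∃ M ∈ localize A (X i.castSucc), H ⊓ L ≤ M)

namespace SSFree

open Finset Module

variable {K : Type} [Field K] {ℓ : ℕ} {A : Finset (Submodule K (Fin ℓ → K))}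

lemma finrank_V : finrank K (Fin ℓ → K) = ℓ := Module.finrank_fin_fun K

lemma finrank_le' (Z : Submodule K (Fin ℓ → K)) : finrank K Z ≤ ℓ := by
  have := Z.finrank_le
  rwa [finrank_V] at this

lemma codim_eq (Z : Submodule K (Fin ℓ → K)) : codim Z = ℓ - finrank K Z := by
  unfold codim; rw [finrank_V]

lemma hyp_finrank (hA : IsArrangement A) {H : Submodule K (Fin ℓ → K)} (hH : H ∈ A) :
    finrank K H + 1 = ℓ := by
  obtain ⟨α, hα0, hker⟩ := hA H hH
  have hrange : LinearMap.range α = ⊤ := by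
    obtain ⟨x, hx⟩ : ∃ x, α x ≠ 0 := by
      by_contra h
      push_neg at h
      exact hα0 (LinearMap.ext fun x => by simp [h x])
    rw [eq_top_iff]
    intro y _
    refine ⟨(y * (α x)⁻¹) • x, ?_⟩
    rw [map_smul, smul_eq_mul]
    field_simp
  have h1 : finrank K (LinearMap.range α) = 1 := by
    rw [hrange, finrank_top, Module.finrank_self]
  have h2 := LinearMap.finrank_range_add_finrank_ker α
  rw [hker, h1, finrank_V] at h2
  omega

lemma hyp_ne_top (hA : IsArrangement A) {H : Submodule K (Fin ℓ → K)} (hH : H ∈ A) :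
    H ≠ ⊤ := by
  intro h
  have h1 := hyp_finrank hA hH
  rw [h, finrank_top, finrank_V] at h1
  omega

lemma top_mem_lat : (⊤ : Submodule K (Fin ℓ → K)) ∈ interLattice A := by
  refine Finset.mem_image.2 ⟨∅, by simp, by simp⟩

lemma mem_lat_of_mem {H : Submodule K (Fin ℓ → K)} (hH : H ∈ A) : H ∈ interLattice A := by
  refine Finset.mem_image.2 ⟨{H}, by simpa using hH, by simp⟩

lemma inf_mem_lat {P Q : Submodule K (Fin ℓ → K)} (hP : P ∈ interLattice A)
    (hQ : Q ∈ interLattice A) : P ⊓ Q ∈ interLattice A := by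
  obtain ⟨B, hB, rfl⟩ := Finset.mem_image.1 hP
  obtain ⟨C, hC, rfl⟩ := Finset.mem_image.1 hQ
  refine Finset.mem_image.2 ⟨B ∪ C, ?_, ?_⟩
  · rw [Finset.mem_powerset] at hB hC ⊢
    exact Finset.union_subset hB hC
  · rw [Finset.inf_union]

lemma lat_eq_inf {Z : Submodule K (Fin ℓ → K)} (hZ : Z ∈ interLattice A) :
    (A.filter fun H => Z ≤ H).inf id = Z := by
  obtain ⟨B, hB, rfl⟩ := Finset.mem_image.1 hZ
  rw [Finset.mem_powerset] at hB
  apply le_antisymm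
  · apply Finset.inf_mono
    intro H hH
    exact Finset.mem_filter.2 ⟨hB hH, Finset.inf_le hH⟩
  · exact Finset.le_inf fun H hH => (Finset.mem_filter.1 hH).2

lemma lat_codim0 {Z : Submodule K (Fin ℓ → K)} (hZ : finrank K Z = ℓ) : Z = ⊤ :=
  Submodule.eq_top_of_finrank_eq (by rw [hZ, finrank_V])

lemma lat_codim1_mem (hA : IsArrangement A) {Z : Submodule K (Fin ℓ → K)}
    (hZ : Z ∈ interLattice A) (hr : finrank K Z + 1 = ℓ) : Z ∈ A := by
  have hinf := lat_eq_inf hZ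
  rcases Finset.eq_empty_or_nonempty (A.filter fun H => Z ≤ H) with he | ⟨H, hH⟩
  · rw [he] at hinf
    simp only [Finset.inf_empty] at hinf
    rw [← hinf, finrank_top, finrank_V] at hr
    omega
  · have hHA := (Finset.mem_filter.1 hH).1
    have hZH := (Finset.mem_filter.1 hH).2
    have : Z = H := by
      apply Submodule.eq_of_le_of_finrank_eq hZH
      have := hyp_finrank hA hHA
      omega
    rwa [this]

lemma inf_hyp_finrank (hA : IsArrangement A) {U H : Submodule K (Fin ℓ → K)} (hH : H ∈ A)
    (hle : ¬ U ≤ H) : finrank K ↥(U ⊓ H) + 1 = finrank K U := by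
  have hsup : finrank K ↥(U ⊔ H) = ℓ := by
    have h1 : H < U ⊔ H := lt_of_le_of_ne le_sup_right
      (by intro h; apply hle; rw [h]; exact le_sup_left)
    have h2 := Submodule.finrank_lt_finrank_of_lt h1
    have h3 := finrank_le' (U ⊔ H)
    have h4 := hyp_finrank hA hH
    omega
  have h5 := Submodule.finrank_sup_add_finrank_inf_eq U H
  have h6 := hyp_finrank hA hH
  have h7 := finrank_le' U
  omega

lemma inf_of_two (hA : IsArrangement A) {H H' Z : Submodule K (Fin ℓ → K)}
    (hH : H ∈ A) (hH' : H' ∈ A) (hne : H ≠ H') (h1 : Z ≤ H) (h2 : Z ≤ H')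
    (hr : finrank K Z + 2 = ℓ) : H ⊓ H' = Z := by
  have hnle : ¬ H ≤ H' := by
    intro h
    exact hne (Submodule.eq_of_le_of_finrank_eq h
      (by have := hyp_finrank hA hH; have := hyp_finrank hA hH'; omega))
  have hfr := inf_hyp_finrank hA hH' hnle
  have := hyp_finrank hA hH
  exact (Submodule.eq_of_le_of_finrank_eq (le_inf h1 h2) (by omega)).symm

/-! ### Möbius function computations -/

lemma mobiusAux_top (L : Finset (Submodule K (Fin ℓ → K))) (n : ℕ) :
    mobiusAux L n ⊤ = 1 := by
  cases n with
  | zero => rfl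
  | succ n => simp [mobiusAux]

lemma filter_lt_hyp (hA : IsArrangement A) {H : Submodule K (Fin ℓ → K)} (hH : H ∈ A) :
    (interLattice A).filter (fun Y => H < Y) = {⊤} := by
  ext Y
  simp only [Finset.mem_filter, Finset.mem_singleton]
  constructor
  · rintro ⟨hY, hlt⟩
    have h1 := Submodule.finrank_lt_finrank_of_lt hlt
    have h2 := hyp_finrank hA hH
    have h3 := finrank_le' Y
    exact lat_codim0 (by omega)
  · rintro rfl
    exact ⟨top_mem_lat, lt_of_le_of_ne le_top (hyp_ne_top hA hH)⟩

lemma mobiusAux_hyp (hA : IsArrangement A) {H : Submodule K (Fin ℓ → K)} (hH : H ∈ A)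
    (n : ℕ) : mobiusAux (interLattice A) (n + 1) H = -1 := by
  rw [mobiusAux, if_neg (hyp_ne_top hA hH), filter_lt_hyp hA hH, Finset.sum_singleton,
    mobiusAux_top]

lemma filter_lt_codim2 (hA : IsArrangement A) {Z : Submodule K (Fin ℓ → K)}
    (hZ : Z ∈ interLattice A) (hr : finrank K Z + 2 = ℓ) :
    (interLattice A).filter (fun Y => Z < Y) = insert ⊤ (A.filter fun H => Z ≤ H) := by
  ext Y
  simp only [Finset.mem_filter, Finset.mem_insert]
  constructor
  · rintro ⟨hY, hlt⟩
    have h1 := Submodule.finrank_lt_finrank_of_lt hlt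
    have h2 := finrank_le' Y
    rcases (by omega : finrank K Y = ℓ ∨ finrank K Y + 1 = ℓ) with h | h
    · exact Or.inl (lat_codim0 h)
    · exact Or.inr ⟨lat_codim1_mem hA hY h, le_of_lt hlt⟩
  · rintro (rfl | ⟨hY, hle⟩)
    · refine ⟨top_mem_lat, lt_of_le_of_ne le_top ?_⟩
      intro h
      rw [h, finrank_top, finrank_V] at hr
      omega
    · refine ⟨mem_lat_of_mem hY, lt_of_le_of_ne hle ?_⟩
      intro h
      have := hyp_finrank hA hY
      rw [← h] at this
      omega

lemma mobius_codim2 (hA : IsArrangement A) {Z : Submodule K (Fin ℓ → K)}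
    (hZ : Z ∈ interLattice A) (hr : finrank K Z + 2 = ℓ) :
    mobius A Z = ((A.filter fun H => Z ≤ H).card : ℤ) - 1 := by
  have htop : ⊤ ∉ A.filter fun H => Z ≤ H := by
    intro h
    exact hyp_ne_top hA (Finset.mem_filter.1 h).1 rfl
  have hZtop : Z ≠ ⊤ := by
    intro h
    rw [h, finrank_top, finrank_V] at hr
    omega
  unfold mobius
  rw [finrank_V]
  rw [congrArg (fun n => mobiusAux (interLattice A) n Z) hr.symm]
  rw [show finrank K ↥Z + 2 = (finrank K ↥Z + 1) + 1 from rfl]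
  rw [mobiusAux, if_neg hZtop, filter_lt_codim2 hA hZ hr, Finset.sum_insert htop,
    mobiusAux_top]
  rw [Finset.sum_congr rfl (fun H hH => mobiusAux_hyp hA (Finset.mem_filter.1 hH).1 _)]
  rw [Finset.sum_const]
  push_cast
  ring

lemma betti_two (hA : IsArrangement A) :
    betti A 2 = ∑ Z ∈ (interLattice A).filter
        (fun (Z : Submodule K (Fin ℓ → K)) => finrank K Z + 2 = ℓ),
      (((A.filter fun H => Z ≤ H).card : ℤ) - 1) := by
  unfold betti
  have hset : (interLattice A).filter (fun X => codim X = 2)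
      = (interLattice A).filter
        (fun (Z : Submodule K (Fin ℓ → K)) => finrank K Z + 2 = ℓ) := by
    apply Finset.filter_congr
    intro Z hZ
    have h1 := finrank_le' (K := K) Z
    rw [codim_eq]
    constructor <;> (intro h; omega)
  rw [hset]
  rw [show ((-1 : ℤ)) ^ 2 = 1 by norm_num, one_mul]
  exact Finset.sum_congr rfl fun Z hZ =>
    mobius_codim2 hA (Finset.mem_filter.1 hZ).1 (Finset.mem_filter.1 hZ).2

/-! ### Counting in a supersolvable arrangement -/

section Bundle

variable (Xn : ℕ → Submodule K (Fin ℓ → K))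

/-- Uniqueness of the lower hyperplane through a codimension-2 flat. -/
lemma exists_unique_M (hA : IsArrangement A)
    (hXpair : ∀ k, 1 ≤ k → k ≤ ℓ → ∀ H L, H ∈ A → L ∈ A → Xn k ≤ H → Xn k ≤ L →
      ¬ Xn (k-1) ≤ H → ¬ Xn (k-1) ≤ L → H ≠ L → ∃ M, M ∈ A ∧ Xn (k-1) ≤ M ∧ H ⊓ L ≤ M)
    {Z : Submodule K (Fin ℓ → K)} {k : ℕ} (hk1 : 1 ≤ k) (hkl : k ≤ ℓ)
    (hZ : Z ∈ interLattice A) (hr : finrank K Z + 2 = ℓ)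
    (hZk : Xn k ≤ Z) (hZk' : ¬ Xn (k-1) ≤ Z) :
    ∃! M, M ∈ A ∧ Xn (k-1) ≤ M ∧ Z ≤ M := by
  classical
  have hinf := lat_eq_inf hZ
  have h2 : ∃ H ∈ A.filter (fun H => Z ≤ H), ∃ L ∈ A.filter (fun H => Z ≤ H), H ≠ L := by
    by_contra h
    push_neg at h
    rcases Finset.eq_empty_or_nonempty (A.filter fun H => Z ≤ H) with he | ⟨H0, hH0⟩
    · rw [he] at hinf
      simp only [Finset.inf_empty] at hinf
      rw [← hinf, finrank_top, finrank_V] at hr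
      omega
    · have hsub : A.filter (fun H => Z ≤ H) = {H0} :=
        Finset.eq_singleton_iff_unique_mem.2 ⟨hH0, fun x hx => h x hx H0 hH0⟩
      rw [hsub] at hinf
      simp only [Finset.inf_singleton, id] at hinf
      have := hyp_finrank hA (Finset.mem_filter.1 hH0).1
      rw [hinf] at this
      omega
  have hout : ∃ H ∈ A.filter (fun H => Z ≤ H), ¬ Xn (k-1) ≤ H := by
    by_contra h
    push_neg at h
    apply hZk'
    calc Xn (k-1) ≤ (A.filter fun H => Z ≤ H).inf id := Finset.le_inf (fun H hH => h H hH)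
    _ = Z := hinf
  have hex : ∃ M, M ∈ A ∧ Xn (k-1) ≤ M ∧ Z ≤ M := by
    obtain ⟨H, hHmem, hHout⟩ := hout
    have hHA := (Finset.mem_filter.1 hHmem).1
    have hZH := (Finset.mem_filter.1 hHmem).2
    by_cases hc : ∃ L ∈ A.filter (fun H => Z ≤ H), ¬ Xn (k-1) ≤ L ∧ L ≠ H
    · obtain ⟨L, hLmem, hLout, hLne⟩ := hc
      have hLA := (Finset.mem_filter.1 hLmem).1
      have hZL := (Finset.mem_filter.1 hLmem).2
      obtain ⟨M, hMA, hMk, hMle⟩ := hXpair k hk1 hkl H L hHA hLA (le_trans hZk hZH)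
        (le_trans hZk hZL) hHout hLout (Ne.symm hLne)
      exact ⟨M, hMA, hMk, le_trans (le_inf hZH hZL) hMle⟩
    · push_neg at hc
      have hL0 : ∃ L0 ∈ A.filter (fun H => Z ≤ H), L0 ≠ H := by
        obtain ⟨H1, hH1, H2, hH2, hne⟩ := h2
        rcases eq_or_ne H1 H with rfl | h1
        · exact ⟨H2, hH2, fun e => hne e.symm⟩
        · exact ⟨H1, hH1, h1⟩
      obtain ⟨L0, hL0mem, hL0ne⟩ := hL0
      by_cases hL0k : Xn (k-1) ≤ L0
      · exact ⟨L0, (Finset.mem_filter.1 hL0mem).1, hL0k, (Finset.mem_filter.1 hL0mem).2⟩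
      · exact absurd (hc L0 hL0mem hL0k) hL0ne
  obtain ⟨M, hM⟩ := hex
  refine ⟨M, hM, ?_⟩
  rintro M' ⟨hM'A, hM'k, hM'Z⟩
  by_contra hne
  have hMM : M' ⊓ M = Z := inf_of_two hA hM'A hM.1 hne hM'Z hM.2.2 hr
  apply hZk'
  rw [← hMM]
  exact le_inf hM'k hM.2.1

lemma fiber_card (hA : IsArrangement A)
    (hXanti : ∀ j k, j ≤ k → k ≤ ℓ → Xn k ≤ Xn j)
    (hXpair : ∀ k, 1 ≤ k → k ≤ ℓ → ∀ H L, H ∈ A → L ∈ A → Xn k ≤ H → Xn k ≤ L →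
      ¬ Xn (k-1) ≤ H → ¬ Xn (k-1) ≤ L → H ≠ L → ∃ M, M ∈ A ∧ Xn (k-1) ≤ M ∧ H ⊓ L ≤ M)
    {k : ℕ} (hk1 : 1 ≤ k) (hkl : k ≤ ℓ)
    {H : Submodule K (Fin ℓ → K)} (hHA : H ∈ A) (hH1 : Xn k ≤ H) (hH2 : ¬ Xn (k-1) ≤ H) :
    ((interLattice A).filter (fun (Z : Submodule K (Fin ℓ → K)) =>
        (finrank K Z + 2 = ℓ ∧ Xn k ≤ Z ∧ ¬ Xn (k-1) ≤ Z) ∧ Z ≤ H)).card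
      = (A.filter fun M => Xn (k-1) ≤ M).card := by
  classical
  have key : ∀ Z ∈ (interLattice A).filter (fun (Z : Submodule K (Fin ℓ → K)) =>
      (finrank K Z + 2 = ℓ ∧ Xn k ≤ Z ∧ ¬ Xn (k-1) ≤ Z) ∧ Z ≤ H),
      ∃! M, M ∈ A ∧ Xn (k-1) ≤ M ∧ Z ≤ M := by
    intro Z hZ
    have h := Finset.mem_filter.1 hZ
    exact exists_unique_M Xn hA hXpair hk1 hkl h.1 h.2.1.1 h.2.1.2.1 h.2.1.2.2
  have hjmem : ∀ M ∈ A.filter (fun M => Xn (k-1) ≤ M),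
      M ⊓ H ∈ (interLattice A).filter (fun (Z : Submodule K (Fin ℓ → K)) =>
        (finrank K Z + 2 = ℓ ∧ Xn k ≤ Z ∧ ¬ Xn (k-1) ≤ Z) ∧ Z ≤ H) := by
    intro M hM
    have hMA := (Finset.mem_filter.1 hM).1
    have hMk := (Finset.mem_filter.1 hM).2
    have hMne : M ≠ H := fun e => hH2 (e ▸ hMk)
    have hnle : ¬ M ≤ H := by
      intro hle
      exact hMne (Submodule.eq_of_le_of_finrank_eq hle
        (by have := hyp_finrank hA hMA; have := hyp_finrank hA hHA; omega))
    have hfr := inf_hyp_finrank hA hHA hnle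
    refine Finset.mem_filter.2 ⟨inf_mem_lat (mem_lat_of_mem hMA) (mem_lat_of_mem hHA),
      ⟨⟨by have := hyp_finrank hA hMA; omega,
        le_inf (le_trans (hXanti (k-1) k (by omega) hkl) hMk) hH1,
        fun hcon => hH2 (le_trans hcon inf_le_right)⟩, inf_le_right⟩⟩
  refine Finset.card_nbij'
    (i := fun Z => if h : ∃ M, M ∈ A ∧ Xn (k-1) ≤ M ∧ Z ≤ M then h.choose else ⊤)
    (j := fun M => M ⊓ H) ?_ hjmem ?_ ?_
  · intro Z hZ
    have hu := key Z hZ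
    dsimp only
    rw [dif_pos hu.exists]
    have hspec := hu.exists.choose_spec
    exact Finset.mem_filter.2 ⟨hspec.1, hspec.2.1⟩
  · intro Z hZ
    have hu := key Z hZ
    dsimp only
    rw [dif_pos hu.exists]
    have hspec := hu.exists.choose_spec
    have h := Finset.mem_filter.1 hZ
    have hMne : hu.exists.choose ≠ H := fun e => hH2 (e ▸ hspec.2.1)
    exact inf_of_two hA hspec.1 hHA hMne hspec.2.2 h.2.2 h.2.1.1
  · intro M hM
    have hsrc := hjmem M hM
    have hu := key _ hsrc
    dsimp only
    rw [dif_pos hu.exists]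
    have hspec := hu.exists.choose_spec
    exact hu.unique hspec ⟨(Finset.mem_filter.1 hM).1, (Finset.mem_filter.1 hM).2, inf_le_left⟩

lemma fiber_sum (hA : IsArrangement A)
    (hXanti : ∀ j k, j ≤ k → k ≤ ℓ → Xn k ≤ Xn j)
    (hXpair : ∀ k, 1 ≤ k → k ≤ ℓ → ∀ H L, H ∈ A → L ∈ A → Xn k ≤ H → Xn k ≤ L →
      ¬ Xn (k-1) ≤ H → ¬ Xn (k-1) ≤ L → H ≠ L → ∃ M, M ∈ A ∧ Xn (k-1) ≤ M ∧ H ⊓ L ≤ M)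
    {k : ℕ} (hk1 : 1 ≤ k) (hkl : k ≤ ℓ) :
    ∑ Z ∈ (interLattice A).filter (fun (Z : Submodule K (Fin ℓ → K)) =>
        finrank K Z + 2 = ℓ ∧ Xn k ≤ Z ∧ ¬ Xn (k-1) ≤ Z),
      (((A.filter fun H => Z ≤ H).card : ℤ) - 1)
    = (((A.filter fun H => Xn k ≤ H).card : ℤ) - ((A.filter fun H => Xn (k-1) ≤ H).card : ℤ))
        * ((A.filter fun H => Xn (k-1) ≤ H).card : ℤ) := by
  classical
  have hstep1 : ∀ Z ∈ (interLattice A).filter (fun (Z : Submodule K (Fin ℓ → K)) =>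
      finrank K Z + 2 = ℓ ∧ Xn k ≤ Z ∧ ¬ Xn (k-1) ≤ Z),
      ((A.filter fun H => Z ≤ H).card : ℤ) - 1
        = (((A.filter (fun H => Xn k ≤ H ∧ ¬ Xn (k-1) ≤ H)).filter fun H => Z ≤ H).card : ℤ) := by
    intro Z hZf
    have hm := Finset.mem_filter.1 hZf
    have hZlat := hm.1
    have hfr := hm.2.1
    have hZk := hm.2.2.1
    have hZk' := hm.2.2.2
    have hsplit := Finset.card_filter_add_card_filter_not
      (s := A.filter fun H => Z ≤ H) (p := fun H => Xn (k-1) ≤ H)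
    have hone : ((A.filter fun H => Z ≤ H).filter fun H => Xn (k-1) ≤ H).card = 1 := by
      obtain ⟨M, hM, huniq⟩ := exists_unique_M Xn hA hXpair hk1 hkl hZlat hfr hZk hZk'
      rw [Finset.card_eq_one]
      refine ⟨M, ?_⟩
      ext x
      simp only [Finset.mem_filter, Finset.mem_singleton]
      constructor
      · rintro ⟨⟨hxA, hxZ⟩, hxk⟩
        exact huniq x ⟨hxA, hxk, hxZ⟩
      · rintro rfl
        exact ⟨⟨hM.1, hM.2.2⟩, hM.2.1⟩
    have hout : (A.filter fun H => Z ≤ H).filter (fun H => ¬ Xn (k-1) ≤ H)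
        = (A.filter (fun H => Xn k ≤ H ∧ ¬ Xn (k-1) ≤ H)).filter fun H => Z ≤ H := by
      ext x
      simp only [Finset.mem_filter]
      constructor
      · rintro ⟨⟨hxA, hxZ⟩, hxk⟩
        exact ⟨⟨hxA, le_trans hZk hxZ, hxk⟩, hxZ⟩
      · rintro ⟨⟨hxA, _, hxk'⟩, hxZ⟩
        exact ⟨⟨hxA, hxZ⟩, hxk'⟩
    rw [← hout]
    have hcards : ((A.filter fun H => Z ≤ H).filter (fun H => ¬ Xn (k-1) ≤ H)).card + 1
        = (A.filter fun H => Z ≤ H).card := by omega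
    rw [← hcards]
    push_cast
    ring
  rw [Finset.sum_congr rfl hstep1]
  have hswap : ∑ Z ∈ (interLattice A).filter (fun (Z : Submodule K (Fin ℓ → K)) =>
        finrank K Z + 2 = ℓ ∧ Xn k ≤ Z ∧ ¬ Xn (k-1) ≤ Z),
      (((A.filter (fun H => Xn k ≤ H ∧ ¬ Xn (k-1) ≤ H)).filter fun H => Z ≤ H).card : ℤ)
      = ∑ H ∈ A.filter (fun H => Xn k ≤ H ∧ ¬ Xn (k-1) ≤ H),
          ((((interLattice A).filter (fun (Z : Submodule K (Fin ℓ → K)) =>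
            finrank K Z + 2 = ℓ ∧ Xn k ≤ Z ∧ ¬ Xn (k-1) ≤ Z)).filter fun Z => Z ≤ H).card : ℤ) := by
    simp_rw [Finset.card_filter]
    push_cast
    rw [Finset.sum_comm]
  rw [hswap]
  have hper : ∀ H ∈ A.filter (fun H => Xn k ≤ H ∧ ¬ Xn (k-1) ≤ H),
      ((((interLattice A).filter (fun (Z : Submodule K (Fin ℓ → K)) =>
          finrank K Z + 2 = ℓ ∧ Xn k ≤ Z ∧ ¬ Xn (k-1) ≤ Z)).filter fun Z => Z ≤ H).card : ℤ)
        = ((A.filter fun M => Xn (k-1) ≤ M).card : ℤ) := by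
    intro H hH
    have hm := Finset.mem_filter.1 hH
    rw [Finset.filter_filter]
    exact_mod_cast congrArg (Nat.cast (R := ℤ))
      (fiber_card Xn hA hXanti hXpair hk1 hkl hm.1 hm.2.1 hm.2.2)
  rw [Finset.sum_congr rfl hper, Finset.sum_const]
  have hBkcard : A.filter (fun H => Xn k ≤ H ∧ ¬ Xn (k-1) ≤ H)
      = (A.filter fun H => Xn k ≤ H) \ (A.filter fun H => Xn (k-1) ≤ H) := by
    ext x
    simp only [Finset.mem_filter, Finset.mem_sdiff]
    tauto
  have hsub : (A.filter fun H => Xn (k-1) ≤ H) ⊆ (A.filter fun H => Xn k ≤ H) := by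
    intro x hx
    have hm := Finset.mem_filter.1 hx
    exact Finset.mem_filter.2 ⟨hm.1, le_trans (hXanti (k-1) k (by omega) hkl) hm.2⟩
  rw [hBkcard, Finset.card_sdiff_of_subset hsub]
  have hle := Finset.card_le_card hsub
  rw [nsmul_eq_mul, Nat.cast_sub hle]

lemma betti_partition (hA : IsArrangement A)
    (hXrank : ∀ k, k ≤ ℓ → finrank K (Xn k) + k = ℓ)
    (hXanti : ∀ j k, j ≤ k → k ≤ ℓ → Xn k ≤ Xn j)
    (hXpair : ∀ k, 1 ≤ k → k ≤ ℓ → ∀ H L, H ∈ A → L ∈ A → Xn k ≤ H → Xn k ≤ L →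
      ¬ Xn (k-1) ≤ H → ¬ Xn (k-1) ≤ L → H ≠ L → ∃ M, M ∈ A ∧ Xn (k-1) ≤ M ∧ H ⊓ L ≤ M) :
    betti A 2 = ∑ k ∈ Finset.range (ℓ+1),
      ((((A.filter fun H => Xn k ≤ H).card : ℤ) - ((A.filter fun H => Xn (k-1) ≤ H).card : ℤ))
        * ((A.filter fun H => Xn (k-1) ≤ H).card : ℤ)) := by
  classical
  rw [betti_two hA]
  have hXbot : Xn ℓ = ⊥ := by
    have h0 := hXrank ℓ le_rfl
    exact Submodule.finrank_eq_zero.1 (by omega)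
  have hXtop : Xn 0 = ⊤ := lat_codim0 (by have := hXrank 0 (by omega); omega)
  have hexZ : ∀ Z : Submodule K (Fin ℓ → K), ∃ n, n ≤ ℓ ∧ Xn n ≤ Z :=
    fun Z => ⟨ℓ, le_rfl, hXbot ▸ bot_le⟩
  have hmaps : ∀ Z ∈ (interLattice A).filter
      (fun (Z : Submodule K (Fin ℓ → K)) => finrank K Z + 2 = ℓ),
      Nat.find (hexZ Z) ∈ Finset.range (ℓ+1) := by
    intro Z _
    simp only [Finset.mem_range]
    have := Nat.find_le (h := hexZ Z) ⟨le_rfl, hXbot ▸ bot_le⟩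
    omega
  rw [← Finset.sum_fiberwise_of_maps_to hmaps
    (fun Z => ((A.filter fun H => Z ≤ H).card : ℤ) - 1)]
  apply Finset.sum_congr rfl
  intro k hk
  rw [Finset.mem_range] at hk
  rcases Nat.eq_zero_or_pos k with rfl | hk1
  · have hz : ((A.filter fun H => Xn 0 ≤ H).card : ℤ) = 0 := by
      rw [Finset.filter_false_of_mem, Finset.card_empty, Nat.cast_zero]
      intro H hH hcon
      rw [hXtop, top_le_iff] at hcon
      exact hyp_ne_top hA hH hcon
    rw [show (0:ℕ) - 1 = 0 from rfl, hz]
    rw [Finset.sum_eq_zero, sub_self, zero_mul]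
    intro Z hZ
    have hm := Finset.mem_filter.1 hZ
    have hfind := hm.2
    have hp0 := (Nat.find_eq_zero (hexZ Z)).1 hfind
    rw [hXtop, top_le_iff] at hp0
    have hfr2 := (Finset.mem_filter.1 hm.1).2
    rw [hp0.2, finrank_top, finrank_V] at hfr2
    omega
  · have hfilt : ((interLattice A).filter
        (fun (Z : Submodule K (Fin ℓ → K)) => finrank K Z + 2 = ℓ)).filter
          (fun Z => Nat.find (hexZ Z) = k)
        = (interLattice A).filter (fun (Z : Submodule K (Fin ℓ → K)) =>
            finrank K Z + 2 = ℓ ∧ Xn k ≤ Z ∧ ¬ Xn (k-1) ≤ Z) := by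
      rw [Finset.filter_filter]
      apply Finset.filter_congr
      intro Z _
      constructor
      · rintro ⟨hfr, hfind⟩
        have hspec := Nat.find_spec (hexZ Z)
        rw [hfind] at hspec
        have hmin := Nat.find_min (hexZ Z) (m := k-1) (by omega)
        refine ⟨hfr, hspec.2, fun hcon => hmin ⟨by omega, hcon⟩⟩
      · rintro ⟨hfr, hk2, hk3⟩
        refine ⟨hfr, (Nat.find_eq_iff _).2 ⟨⟨by omega, hk2⟩, ?_⟩⟩
        rintro m hm ⟨hm1, hm2⟩
        exact hk3 (le_trans (hXanti m (k-1) (by omega) (by omega)) hm2)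
    rw [hfilt]
    exact fiber_sum Xn hA hXanti hXpair hk1 (by omega)

/-! ### The divisional flag -/

lemma pkg (hA : IsArrangement A)
    (hXrank : ∀ k, k ≤ ℓ → finrank K (Xn k) + k = ℓ)
    (hXlat : ∀ k, k ≤ ℓ → Xn k ∈ interLattice A)
    (hXanti : ∀ j k, j ≤ k → k ≤ ℓ → Xn k ≤ Xn j)
    (hXpair : ∀ k, 1 ≤ k → k ≤ ℓ → ∀ H L, H ∈ A → L ∈ A → Xn k ≤ H → Xn k ≤ L →
      ¬ Xn (k-1) ≤ H → ¬ Xn (k-1) ≤ L → H ≠ L → ∃ M, M ∈ A ∧ Xn (k-1) ≤ M ∧ H ⊓ L ≤ M)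
    (Kc : ℕ → Submodule K (Fin ℓ → K))
    (hKc : ∀ b, 1 ≤ b → b ≤ ℓ → Kc b ∈ A ∧ Xn b ≤ Kc b ∧ ¬ Xn (b-1) ≤ Kc b)
    (Yn : ℕ → Submodule K (Fin ℓ → K))
    (hY0 : Yn 0 = ⊤)
    (hYs : ∀ i, Yn (i+1) = Yn i ⊓ Kc (ℓ - i)) :
    ∀ i, i ≤ ℓ →
      (Yn i ∈ interLattice A) ∧
      (∀ j, j ≤ ℓ - i → finrank K ↥(Xn j ⊓ Yn i) + (i + j) = ℓ) ∧
      (∀ H, H ∈ A → Xn (ℓ - i) ≤ H → ¬ Yn i ≤ H) ∧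
      (∀ H H', H ∈ A → H' ∈ A → Xn (ℓ - i) ≤ H → Xn (ℓ - i) ≤ H' → H ≠ H' →
        Yn i ⊓ H ≠ Yn i ⊓ H') ∧
      (∀ G, G ∈ A → ¬ Yn i ≤ G → ∃ H, H ∈ A ∧ Xn (ℓ - i) ≤ H ∧ Yn i ⊓ G = Yn i ⊓ H) := by
  have hXtop : Xn 0 = ⊤ := lat_codim0 (by have := hXrank 0 (by omega); omega)
  have hXbot : Xn ℓ = ⊥ := by
    have h0 := hXrank ℓ le_rfl
    exact Submodule.finrank_eq_zero.1 (by omega)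
  intro i
  induction i with
  | zero =>
    intro _
    refine ⟨hY0 ▸ top_mem_lat, ?_, ?_, ?_, ?_⟩
    · intro j hj
      rw [hY0, inf_top_eq]
      have := hXrank j (by omega)
      omega
    · intro H hHA _ hle
      rw [hY0, top_le_iff] at hle
      exact hyp_ne_top hA hHA hle
    · intro H H' _ _ _ _ hne heq
      rw [hY0, top_inf_eq, top_inf_eq] at heq
      exact hne heq
    · intro G hGA _
      refine ⟨G, hGA, ?_, rfl⟩
      rw [Nat.sub_zero, hXbot]
      exact bot_le
  | succ i ih =>
    intro hi1
    obtain ⟨hYlat, hT, hb, hc, hs⟩ := ih (by omega)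
    have hk1 : ℓ - i = (ℓ - (i+1)) + 1 := by omega
    set k := ℓ - (i+1) with hkdef
    have hkl : k + 1 ≤ ℓ := by omega
    obtain ⟨hKA, hKk, hKk'⟩ :
        Kc (k+1) ∈ A ∧ Xn (k+1) ≤ Kc (k+1) ∧ ¬ Xn k ≤ Kc (k+1) := by
      have h := hKc (k+1) (by omega) hkl
      simpa using h
    have hYdef : Yn (i+1) = Yn i ⊓ Kc (k+1) := by rw [hYs i, hk1]
    have hbK : ¬ Yn i ≤ Kc (k+1) := hb (Kc (k+1)) hKA (by rw [hk1]; exact hKk)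
    have hfrY : finrank K (Yn i) + i = ℓ := by
      have h := hT 0 (by omega)
      rw [hXtop, top_inf_eq] at h
      omega
    have hfrY' : finrank K ↥(Yn i ⊓ Kc (k+1)) + (i+1) = ℓ := by
      have := inf_hyp_finrank hA hKA hbK
      omega
    have hR : Xn (k+1) = Xn k ⊓ Kc (k+1) := by
      apply Submodule.eq_of_le_of_finrank_eq
      · exact le_inf (hXanti k (k+1) (by omega) hkl) hKk
      · have h1 := inf_hyp_finrank hA hKA hKk'
        have h2 := hXrank k (by omega)
        have h3 := hXrank (k+1) hkl
        omega
    have hKEYC : ¬ (Xn k ⊓ Yn i ≤ Kc (k+1)) := by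
      intro hle
      have h1 : Xn k ⊓ Yn i ≤ Xn (k+1) ⊓ Yn i := by
        rw [hR]
        exact le_inf (le_inf inf_le_left hle) inf_le_right
      have h2 := Submodule.finrank_mono h1
      have h3 := hT k (by omega)
      have h4 := hT (k+1) (by omega)
      omega
    -- (b) at i+1
    have hbS : ∀ H, H ∈ A → Xn k ≤ H → ¬ Yn (i+1) ≤ H := by
      intro H hHA hHk hle
      rw [hYdef] at hle
      have hH1 : Xn (k+1) ≤ H := le_trans (hXanti k (k+1) (by omega) hkl) hHk
      have hHY : ¬ Yn i ≤ H := hb H hHA (by rw [hk1]; exact hH1)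
      have hne : H ≠ Kc (k+1) := fun e => hKk' (e ▸ hHk)
      have heq : Yn i ⊓ Kc (k+1) = Yn i ⊓ H := by
        apply Submodule.eq_of_le_of_finrank_eq
        · exact le_inf inf_le_left hle
        · have h1 := inf_hyp_finrank hA hKA hbK
          have h2 := inf_hyp_finrank hA hHA hHY
          omega
      exact hc (Kc (k+1)) H hKA hHA (by rw [hk1]; exact hKk) (by rw [hk1]; exact hH1)
        (Ne.symm hne) heq
    -- (c) at i+1
    have hcS : ∀ H H', H ∈ A → H' ∈ A → Xn k ≤ H → Xn k ≤ H' → H ≠ H' →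
        Yn (i+1) ⊓ H ≠ Yn (i+1) ⊓ H' := by
      intro H H' hHA hH'A hHk hH'k hne heq
      rw [hYdef] at heq
      have hH1 : Xn (k+1) ≤ H := le_trans (hXanti k (k+1) (by omega) hkl) hHk
      have hH'1 : Xn (k+1) ≤ H' := le_trans (hXanti k (k+1) (by omega) hkl) hH'k
      have hbH : ¬ Yn i ≤ H := hb H hHA (by rw [hk1]; exact hH1)
      have hbH' : ¬ Yn i ≤ H' := hb H' hH'A (by rw [hk1]; exact hH'1)
      have hWne : Yn i ⊓ H ≠ Yn i ⊓ H' :=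
        hc H H' hHA hH'A (by rw [hk1]; exact hH1) (by rw [hk1]; exact hH'1) hne
      have hfrW := inf_hyp_finrank hA hHA hbH
      have hfrW' := inf_hyp_finrank hA hH'A hbH'
      have hbZ : ¬ (Yn i ⊓ Kc (k+1)) ≤ H := by
        have := hbS H hHA hHk
        rwa [hYdef] at this
      have hZfr := inf_hyp_finrank hA hHA hbZ
      have hZW : (Yn i ⊓ Kc (k+1)) ⊓ H ≤ (Yn i ⊓ H) ⊓ (Yn i ⊓ H') := by
        refine le_inf (le_inf (le_trans inf_le_left inf_le_left) inf_le_right) ?_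
        rw [heq]
        exact le_inf (le_trans inf_le_left inf_le_left) inf_le_right
      have hWW : (Yn i ⊓ H) ⊓ (Yn i ⊓ H') < Yn i ⊓ H := by
        refine lt_of_le_of_ne inf_le_left ?_
        intro e
        apply hWne
        apply Submodule.eq_of_le_of_finrank_eq (e ▸ inf_le_right)
        omega
      have hfrWW := Submodule.finrank_lt_finrank_of_lt hWW
      have hmono := Submodule.finrank_mono hZW
      have hZeq : (Yn i ⊓ H) ⊓ (Yn i ⊓ H') = (Yn i ⊓ Kc (k+1)) ⊓ H := by
        symm
        apply Submodule.eq_of_le_of_finrank_eq hZW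
        omega
      apply hKEYC
      have hXkW : Xn k ⊓ Yn i ≤ (Yn i ⊓ H) ⊓ (Yn i ⊓ H') :=
        le_inf (le_inf inf_le_right (le_trans inf_le_left hHk))
          (le_inf inf_le_right (le_trans inf_le_left hH'k))
      rw [hZeq] at hXkW
      exact le_trans hXkW (le_trans inf_le_left inf_le_right)
    refine ⟨?_, ?_, hbS, hcS, ?_⟩
    · rw [hYdef]
      exact inf_mem_lat hYlat (mem_lat_of_mem hKA)
    · intro j hj
      have hj' : j ≤ k := hj
      have hnle : ¬ (Xn j ⊓ Yn i ≤ Kc (k+1)) := by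
        intro hle
        apply hKEYC
        exact le_trans (le_inf (le_trans inf_le_left (hXanti j k hj' (by omega))) inf_le_right) hle
      have h1 := inf_hyp_finrank hA hKA hnle
      have h2 := hT j (by omega)
      rw [hYdef, ← inf_assoc]
      omega
    · intro G hGA hGle
      rw [hYdef] at hGle
      by_cases hGk : Xn k ≤ G
      · exact ⟨G, hGA, hGk, rfl⟩
      · have hGY : ¬ Yn i ≤ G := fun h => hGle (le_trans inf_le_left h)
        obtain ⟨H₁, hH₁A, hH₁x, hEq⟩ := hs G hGA hGY
        rw [hk1] at hH₁x
        by_cases hH₁k : Xn k ≤ H₁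
        · refine ⟨H₁, hH₁A, hH₁k, ?_⟩
          rw [hYdef, inf_right_comm, hEq, inf_right_comm]
        · by_cases hne' : H₁ = Kc (k+1)
          case pos =>
            exfalso
            apply hGle
            rw [← hne']
            have : Yn i ⊓ H₁ ≤ G := by rw [← hEq]; exact inf_le_right
            exact this
          case neg =>
            have hne : H₁ ≠ Kc (k+1) := hne'
            obtain ⟨M, hMA, hMk, hMle⟩ :=
              hXpair (k+1) (by omega) hkl H₁ (Kc (k+1)) hH₁A hKA hH₁x hKk
                (by simpa using hH₁k) (by simpa using hKk') hne
            have hMk' : Xn k ≤ M := by simpa using hMk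
            refine ⟨M, hMA, hMk', ?_⟩
            rw [hYdef]
            apply Submodule.eq_of_le_of_finrank_eq
            · refine le_inf inf_le_left ?_
              have h5 : (Yn i ⊓ Kc (k+1)) ⊓ G = (Yn i ⊓ G) ⊓ Kc (k+1) := inf_right_comm _ _ _
              rw [h5, hEq]
              exact le_trans (le_inf (le_trans inf_le_left inf_le_right) inf_le_right) hMle
            · have hbM : ¬ (Yn i ⊓ Kc (k+1)) ≤ M := by
                have := hbS M hMA hMk'
                rwa [hYdef] at this
              have h6 := inf_hyp_finrank hA hGA hGle
              have h7 := inf_hyp_finrank hA hMA hbM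
              omega

lemma restrict_card (Yp : Submodule K (Fin ℓ → K)) (m : ℕ)
    (hbY : ∀ H, H ∈ A → Xn m ≤ H → ¬ Yp ≤ H)
    (hcY : ∀ H H', H ∈ A → H' ∈ A → Xn m ≤ H → Xn m ≤ H' → H ≠ H' → Yp ⊓ H ≠ Yp ⊓ H')
    (hsY : ∀ G, G ∈ A → ¬ Yp ≤ G → ∃ H, H ∈ A ∧ Xn m ≤ H ∧ Yp ⊓ G = Yp ⊓ H) :
    (restrict A Yp).card = (A.filter fun H => Xn m ≤ H).card := by
  classical
  unfold Arr.restrict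
  have h1 : ((A.filter fun H => ¬ Yp ≤ H).image fun H => Submodule.comap Yp.subtype H).card
      = ((A.filter fun H => ¬ Yp ≤ H).image fun H => Yp ⊓ H).card := by
    have himg : (((A.filter fun H => ¬ Yp ≤ H).image fun H => Submodule.comap Yp.subtype H).image
        (Submodule.map Yp.subtype)) = (A.filter fun H => ¬ Yp ≤ H).image fun H => Yp ⊓ H := by
      rw [Finset.image_image]
      apply Finset.image_congr
      intro H _
      exact Submodule.map_comap_subtype _ _
    rw [← himg, Finset.card_image_of_injective _
      (Submodule.map_injective_of_injective (Submodule.injective_subtype Yp))]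
  rw [h1]
  have h2 : ((A.filter fun H => ¬ Yp ≤ H).image fun H => Yp ⊓ H)
      = ((A.filter fun H => Xn m ≤ H).image fun H => Yp ⊓ H) := by
    apply Finset.Subset.antisymm
    · intro x hx
      obtain ⟨G, hG, rfl⟩ := Finset.mem_image.1 hx
      obtain ⟨hGA, hGle⟩ := Finset.mem_filter.1 hG
      obtain ⟨H, hHA, hHm, hEq⟩ := hsY G hGA hGle
      exact Finset.mem_image.2 ⟨H, Finset.mem_filter.2 ⟨hHA, hHm⟩, hEq.symm⟩
    · intro x hx
      obtain ⟨H, hH, rfl⟩ := Finset.mem_image.1 hx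
      obtain ⟨hHA, hHm⟩ := Finset.mem_filter.1 hH
      exact Finset.mem_image.2 ⟨H, Finset.mem_filter.2 ⟨hHA, hbY H hHA hHm⟩, rfl⟩
  rw [h2]
  apply Finset.card_image_of_injOn
  intro H hH H' hH' hEq
  by_contra hne
  have hm1 := Finset.mem_filter.1 (Finset.mem_coe.1 hH)
  have hm2 := Finset.mem_filter.1 (Finset.mem_coe.1 hH')
  exact hcY H H' hm1.1 hm2.1 hm1.2 hm2.2 hne hEq

end Bundle

end SSFree

/-- A supersolvable arrangement is divisionally free: there is a flag
`V = Y_0 ⊋ Y_1 ⊋ ⋯ ⊋ Y_{ℓ-1}`, `Y_i ∈ L_i(A)`, with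
`b_2(A) = ∑_{i=0}^{ℓ-2} (|A^{Y_i}| - |A^{Y_{i+1}}|)·|A^{Y_{i+1}}|`. -/
theorem supersolvable_divisionally_free {K : Type} [Field K] {ℓ : ℕ}
    (A : Finset (Submodule K (Fin ℓ → K))) (hA : IsArrangement A)
    (hss : Supersolvable A) :
    ∃ Y : Fin ℓ → Submodule K (Fin ℓ → K),
      (∀ i, Y i ∈ interLattice A ∧ codim (Y i) = i.1) ∧
      (∀ i : Fin (ℓ - 1),
        Y ⟨i.1 + 1, by have := i.2; omega⟩ < Y ⟨i.1, by have := i.2; omega⟩) ∧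
      betti A 2 = ∑ i : Fin (ℓ - 1),
        (((restrict A (Y ⟨i.1, by have := i.2; omega⟩)).card : ℤ)
            - ((restrict A (Y ⟨i.1 + 1, by have := i.2; omega⟩)).card : ℤ))
          * ((restrict A (Y ⟨i.1 + 1, by have := i.2; omega⟩)).card : ℤ) := by
  classical
  obtain ⟨X, hX1, hX2, hX3⟩ := hss
  have hD : Module.finrank K (Fin ℓ → K) = ℓ := SSFree.finrank_V
  set Xn : ℕ → Submodule K (Fin ℓ → K) :=
    fun k => if h : k < Module.finrank K (Fin ℓ → K) + 1 then X ⟨k, h⟩ else ⊥ with hXn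
  have hXget : ∀ k, (hk : k ≤ ℓ) → Xn k = X ⟨k, by omega⟩ := by
    intro k hk
    simp only [hXn]
    rw [dif_pos (by omega)]
  have hXlat : ∀ k, k ≤ ℓ → Xn k ∈ interLattice A := by
    intro k hk
    rw [hXget k hk]
    exact (hX1 _).1
  have hXrank : ∀ k, k ≤ ℓ → Module.finrank K (Xn k) + k = ℓ := by
    intro k hk
    have h := (hX1 ⟨k, by omega⟩).2
    rw [SSFree.codim_eq] at h
    rw [hXget k hk]
    have hle := SSFree.finrank_le' (K := K) (X ⟨k, by omega⟩)
    simp only at h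
    omega
  have hXstep : ∀ k, k < ℓ → Xn (k+1) < Xn k := by
    intro k hk
    have h := hX2 ⟨k, by omega⟩
    rw [hXget (k+1) (by omega), hXget k (by omega)]
    exact h
  have hXanti : ∀ j k, j ≤ k → k ≤ ℓ → Xn k ≤ Xn j := by
    intro j k hjk hkl
    induction k with
    | zero =>
      have : j = 0 := by omega
      subst this
      exact le_rfl
    | succ n ihn =>
      rcases Nat.eq_or_lt_of_le hjk with h | h
      · subst h
        exact le_rfl
      · exact le_trans (le_of_lt (hXstep n (by omega))) (ihn (by omega) (by omega))
  have hXpair : ∀ k, 1 ≤ k → k ≤ ℓ → ∀ H L, H ∈ A → L ∈ A → Xn k ≤ H → Xn k ≤ L →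
      ¬ Xn (k-1) ≤ H → ¬ Xn (k-1) ≤ L → H ≠ L → ∃ M, M ∈ A ∧ Xn (k-1) ≤ M ∧ H ⊓ L ≤ M := by
    intro k hk1 hkl H L hHA hLA hH1 hL1 hH2 hL2 hne
    have hfin : ((⟨k-1, by omega⟩ : Fin (Module.finrank K (Fin ℓ → K))).succ : Fin (Module.finrank K (Fin ℓ → K) + 1)) = ⟨k, by omega⟩ := by
      ext
      simp
      omega
    have hfin2 : ((⟨k-1, by omega⟩ : Fin (Module.finrank K (Fin ℓ → K))).castSucc : Fin (Module.finrank K (Fin ℓ → K) + 1)) = ⟨k-1, by omega⟩ := rfl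
    have hXk := hXget k hkl
    have hXk1 := hXget (k-1) (by omega)
    have h := hX3 ⟨k-1, by omega⟩ H ?_ L ?_ ?_ ?_ hne
    · obtain ⟨M, hM1, hM2⟩ := h
      rw [localize, Finset.mem_filter] at hM1
      refine ⟨M, hM1.1, ?_, hM2⟩
      rw [hXk1]
      rw [hfin2] at hM1
      exact hM1.2
    · rw [localize, Finset.mem_filter, hfin]
      exact ⟨hHA, by rw [← hXk]; exact hH1⟩
    · rw [localize, Finset.mem_filter, hfin]
      exact ⟨hLA, by rw [← hXk]; exact hL1⟩
    · rw [localize, Finset.mem_filter, hfin2]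
      intro hcon
      exact hH2 (by rw [hXk1]; exact hcon.2)
    · rw [localize, Finset.mem_filter, hfin2]
      intro hcon
      exact hL2 (by rw [hXk1]; exact hcon.2)
  have hXtop : Xn 0 = ⊤ := SSFree.lat_codim0 (by have := hXrank 0 (by omega); omega)
  have hblock : ∀ b, 1 ≤ b → b ≤ ℓ → ∃ H, H ∈ A ∧ Xn b ≤ H ∧ ¬ Xn (b-1) ≤ H := by
    intro b h1 h2
    by_contra h
    push_neg at h
    have h3 : Xn (b-1) ≤ Xn b := by
      have h4 := SSFree.lat_eq_inf (hXlat b h2)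
      rw [← h4]
      exact Finset.le_inf fun H hH =>
        h H (Finset.mem_filter.1 hH).1 (Finset.mem_filter.1 hH).2
    have h5 := Submodule.finrank_mono h3
    have h6 := hXrank b h2
    have h7 := hXrank (b-1) (by omega)
    omega
  set Kc : ℕ → Submodule K (Fin ℓ → K) := fun b =>
    if h : ∃ H, H ∈ A ∧ Xn b ≤ H ∧ ¬ Xn (b-1) ≤ H then h.choose else ⊤ with hKcdef
  have hKcspec : ∀ b, 1 ≤ b → b ≤ ℓ → Kc b ∈ A ∧ Xn b ≤ Kc b ∧ ¬ Xn (b-1) ≤ Kc b := by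
    intro b h1 h2
    have h := hblock b h1 h2
    simp only [hKcdef]
    rw [dif_pos h]
    exact h.choose_spec
  set Yn : ℕ → Submodule K (Fin ℓ → K) :=
    fun i => Nat.rec ⊤ (fun i Y => Y ⊓ Kc (ℓ - i)) i with hYndef
  have hY0 : Yn 0 = ⊤ := rfl
  have hYs : ∀ i, Yn (i+1) = Yn i ⊓ Kc (ℓ - i) := fun i => rfl
  have hpkg := SSFree.pkg (A := A) Xn hA hXrank hXlat hXanti hXpair Kc hKcspec Yn hY0 hYs
  have hfrY : ∀ m, m ≤ ℓ → Module.finrank K (Yn m) + m = ℓ := by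
    intro m hm
    obtain ⟨_, hT, _, _, _⟩ := hpkg m hm
    have h := hT 0 (by omega)
    rw [hXtop, top_inf_eq] at h
    omega
  refine ⟨fun i => Yn i.1, ?_, ?_, ?_⟩
  · intro i
    obtain ⟨hlat, _, _, _, _⟩ := hpkg i.1 (by omega)
    refine ⟨hlat, ?_⟩
    show codim (Yn i.1) = i.1
    have h := hfrY i.1 (by omega)
    rw [SSFree.codim_eq]
    omega
  · intro i
    show Yn (i.1+1) < Yn i.1
    have h1 : Module.finrank K (Yn i.1) + i.1 = ℓ := hfrY i.1 (by have := i.2; omega)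
    have h2 : Module.finrank K (Yn (i.1+1)) + (i.1+1) = ℓ :=
      hfrY (i.1+1) (by have := i.2; omega)
    refine lt_of_le_of_ne ?_ ?_
    · rw [hYs]
      exact inf_le_left
    · intro e
      have := congrArg (fun (S : Submodule K (Fin ℓ → K)) => Module.finrank K S) e
      omega
  · have hcard : ∀ m, m ≤ ℓ →
        ((restrict A (Yn m)).card) = (A.filter fun H => Xn (ℓ - m) ≤ H).card := by
      intro m hm
      obtain ⟨_, _, hb, hc, hs⟩ := hpkg m hm
      exact SSFree.restrict_card Xn (Yn m) (ℓ - m) hb hc hs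
    show betti A 2 = ∑ i : Fin (ℓ - 1),
      (((restrict A (Yn i.1)).card : ℤ) - ((restrict A (Yn (i.1+1))).card : ℤ))
        * ((restrict A (Yn (i.1+1))).card : ℤ)
    have hbetti := SSFree.betti_partition (A := A) Xn hA hXrank hXanti hXpair
    rw [hbetti]
    have hterm : ∀ i : Fin (ℓ - 1),
        (((restrict A (Yn i.1)).card : ℤ) - ((restrict A (Yn (i.1+1))).card : ℤ))
          * ((restrict A (Yn (i.1+1))).card : ℤ)
        = (((A.filter fun H => Xn (ℓ - i.1) ≤ H).card : ℤ)
            - ((A.filter fun H => Xn (ℓ - i.1 - 1) ≤ H).card : ℤ))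
          * ((A.filter fun H => Xn (ℓ - i.1 - 1) ≤ H).card : ℤ) := by
      intro i
      have h1 := hcard i.1 (by have := i.2; omega)
      have h2 := hcard (i.1+1) (by have := i.2; omega)
      have h3 : ℓ - (i.1+1) = ℓ - i.1 - 1 := by omega
      rw [h1, h2, h3]
    rw [Finset.sum_congr rfl (fun i _ => hterm i)]
    have hN0 : ((A.filter fun H => Xn 0 ≤ H).card : ℤ) = 0 := by
      rw [Finset.filter_false_of_mem, Finset.card_empty, Nat.cast_zero]
      intro H hH hcon
      rw [hXtop, top_le_iff] at hcon
      exact SSFree.hyp_ne_top hA hH hcon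
    have hsplit : ∑ k ∈ Finset.range (ℓ+1),
        ((((A.filter fun H => Xn k ≤ H).card : ℤ)
            - ((A.filter fun H => Xn (k-1) ≤ H).card : ℤ))
          * ((A.filter fun H => Xn (k-1) ≤ H).card : ℤ))
        = ∑ k ∈ Finset.Ico 2 (ℓ+1),
        ((((A.filter fun H => Xn k ≤ H).card : ℤ)
            - ((A.filter fun H => Xn (k-1) ≤ H).card : ℤ))
          * ((A.filter fun H => Xn (k-1) ≤ H).card : ℤ)) := by
      symm
      apply Finset.sum_subset
      · intro x hx
        rw [Finset.mem_Ico] at hx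
        rw [Finset.mem_range]
        omega
      · intro x hx1 hx2
        rw [Finset.mem_range] at hx1
        rw [Finset.mem_Ico] at hx2
        have : x = 0 ∨ x = 1 := by omega
        rcases this with rfl | rfl
        · rw [show (0:ℕ) - 1 = 0 from rfl, sub_self, zero_mul]
        · rw [show (1:ℕ) - 1 = 0 from rfl, hN0, mul_zero]
    rw [hsplit]
    rw [Fin.sum_univ_eq_sum_range (fun j =>
      ((((A.filter fun H => Xn (ℓ - j) ≤ H).card : ℤ)
          - ((A.filter fun H => Xn (ℓ - j - 1) ≤ H).card : ℤ))
        * ((A.filter fun H => Xn (ℓ - j - 1) ≤ H).card : ℤ))) (ℓ - 1)]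
    symm
    apply Finset.sum_nbij' (i := fun j => ℓ - j) (j := fun k => ℓ - k)
    · intro a ha
      rw [Finset.mem_range] at ha
      rw [Finset.mem_Ico]
      omega
    · intro a ha
      rw [Finset.mem_Ico] at ha
      rw [Finset.mem_range]
      omega
    · intro a ha
      rw [Finset.mem_range] at ha
      omega
    · intro a ha
      rw [Finset.mem_Ico] at ha
      omega
    · intro a ha
      rfl
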